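/- Sufficiency direction of the GBPD–assignment correspondence (Theorem 1): suppose ξ is a binary feasible solution of the primal program (P) (ξ_{ij} ∈ {0,1}, Σ_i ξ_{ij} = 1 for all j, Σ_j ξ_{ij} = κ_i for all i) and there exists a parameter vector μ ∈ ℝ^k such that the GBPD with parameters (A_i, s_i, μ_i) induces ξ, i.e., ξ_{ij} = 1 implies ‖x_j − s_i‖²_{A_i} − μ_i ≤ ‖x_j − s_l‖²_{A_l} − μ_l for all l ∈ [k]. Then ξ is an optimal solution of (P): for every feasible solution ζ of (P), Σ_{i,j} ξ_{ij}‖x_j − s_i‖²_{A_i} ≤ Σ_{i,j} ζ_{ij}‖x_j − s_i‖²_{A_i}. -/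

import Mathlib

open Matrix

/-- Sufficiency direction of the GBPD–assignment correspondence: a binary feasible
assignment induced by a generalized balanced power diagram is optimal for (P). -/
theorem gbpd_induced_binary_assignment_is_optimal
    {d k N : ℕ}
    (x : Fin N → Fin d → ℝ) (s : Fin k → Fin d → ℝ)
    (A : Fin k → Matrix (Fin d) (Fin d) ℝ)
    (hA : ∀ i, (A i).PosDef)
    (κ : Fin k → ℝ) (hκ : ∀ i, 0 ≤ κ i) (hκsum : ∑ i, κ i = (N : ℝ))
    (ξ : Fin k → Fin N → ℝ)
    (hξbin : ∀ i j, ξ i j = 0 ∨ ξ i j = 1)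
    (hξcol : ∀ j, ∑ i, ξ i j = 1)
    (hξrow : ∀ i, ∑ j, ξ i j = κ i)
    (μ : Fin k → ℝ)
    (hinduce : ∀ i j, ξ i j = 1 → ∀ l : Fin k,
      (x j - s i) ⬝ᵥ (A i).mulVec (x j - s i) - μ i ≤
        (x j - s l) ⬝ᵥ (A l).mulVec (x j - s l) - μ l) :
    ∀ ζ : Fin k → Fin N → ℝ,
      (∀ i j, 0 ≤ ζ i j) → (∀ j, ∑ i, ζ i j = 1) → (∀ i, ∑ j, ζ i j = κ i) →
      ∑ i, ∑ j, ξ i j * ((x j - s i) ⬝ᵥ (A i).mulVec (x j - s i)) ≤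
        ∑ i, ∑ j, ζ i j * ((x j - s i) ⬝ᵥ (A i).mulVec (x j - s i)) := by
  intro ζ hζnn hζcol hζrow
  set c : Fin k → Fin N → ℝ :=
    fun i j => (x j - s i) ⬝ᵥ (A i).mulVec (x j - s i) with hc
  -- expand: ∑ i ∑ j η c = ∑ j ∑ i η (c - μ) + ∑ i μ κ, for any row-feasible η
  have expand : ∀ (η : Fin k → Fin N → ℝ), (∀ i, ∑ j, η i j = κ i) →
      ∑ i, ∑ j, η i j * c i j
        = (∑ j, ∑ i, η i j * (c i j - μ i)) + ∑ i, μ i * κ i := by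
    intro η hrow
    rw [Finset.sum_comm (s := Finset.univ) (t := Finset.univ)
      (f := fun j i => η i j * (c i j - μ i))]
    have : ∀ i : Fin k, ∑ j, η i j * (c i j - μ i)
        = (∑ j, η i j * c i j) - μ i * κ i := by
      intro i
      simp only [mul_sub]
      rw [Finset.sum_sub_distrib, ← Finset.sum_mul, hrow i, mul_comm]
    simp only [this, Finset.sum_sub_distrib]
    ring
  rw [expand ξ hξrow, expand ζ hζrow]
  refine add_le_add ?_ le_rfl
  apply Finset.sum_le_sum
  intro j _
  -- pick the cell containing x j
  obtain ⟨i0, hi0⟩ : ∃ i, ξ i j = 1 := by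
    by_contra h
    push_neg at h
    have : ∀ i, ξ i j = 0 := fun i => (hξbin i j).resolve_right (h i)
    have hz : ∑ i, ξ i j = 0 := Finset.sum_eq_zero fun i _ => this i
    rw [hξcol j] at hz
    exact one_ne_zero hz
  calc ∑ i, ξ i j * (c i j - μ i)
      ≤ ∑ i, ξ i j * (c i0 j - μ i0) := by
        apply Finset.sum_le_sum
        intro i _
        rcases hξbin i j with h0 | h1
        · simp [h0]
        · simp only [h1, one_mul]
          exact hinduce i j h1 i0
    _ = c i0 j - μ i0 := by rw [← Finset.sum_mul, hξcol j, one_mul]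
    _ = (∑ i, ζ i j) * (c i0 j - μ i0) := by rw [hζcol j, one_mul]
    _ = ∑ i, ζ i j * (c i0 j - μ i0) := by rw [Finset.sum_mul]
    _ ≤ ∑ i, ζ i j * (c i j - μ i) := by
        apply Finset.sum_le_sum
        intro i _
        exact mul_le_mul_of_nonneg_left (hinduce i0 j hi0 i) (hζnn i j)
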